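/- Subintegrability lemma: Let G = (V, E) be a finite connected graph with arrow set 𝔼, and x : 𝔼 → ℝ ∪ {−∞} a function with x(a) + x(ā) ≤ 0 for every arrow a and Σ_{a ∈ z} x(a) ≤ 0 for every directed circuit z in G. Then there exists h : V → ℝ such that x(a) ≤ h(u) − h(v) for every arrow a = u→v, with equality if and only if either x(a) + x(ā) = 0 or there exists a directed circuit z containing a with Σ_{b ∈ z} x(b) = 0. -/

import Mathlib

open Finset

/-- A (directed, elementary) circuit in a graph given by tail/head maps: a nonempty list of
arrows with pairwise distinct tails, each head equal to the next tail, and the last head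
equal to the first tail. -/
def IsCircuit {V E : Type*} (tl hd : E → V) (z : List E) : Prop :=
  z ≠ [] ∧ (z.map tl).Nodup ∧
    List.Chain' (fun a b => hd a = tl b) z ∧
    ∀ a ∈ z.getLast?, ∀ b ∈ z.head?, hd a = tl b

section TrailAux

variable {V E : Type*} (tl hd : E → V)

/-- A directed walk from `u` to `v`, as a list of arrows. -/
inductive Trail : V → V → List E → Prop
  | nil (u : V) : Trail u u []
  | cons (a : E) {w : V} {z : List E} (h : Trail (hd a) w z) : Trail (tl a) w (a :: z)

variable {tl hd}

lemma Trail.append {u v w : V} {z₁ z₂ : List E} (h₁ : Trail tl hd u v z₁)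
    (h₂ : Trail tl hd v w z₂) : Trail tl hd u w (z₁ ++ z₂) := by
  induction h₁ with
  | nil => simpa
  | cons a h ih => exact .cons a (ih h₂)

lemma Trail.tl_head {u v : V} {z : List E} (h : Trail tl hd u v z) :
    ∀ a ∈ z.head?, tl a = u := by
  cases h with
  | nil => simp
  | cons a h => simp

lemma Trail.nil_eq {u v : V} (h : Trail tl hd u v []) : u = v := by
  cases h; rfl

lemma Trail.chain' {u v : V} {z : List E} (h : Trail tl hd u v z) :
    z.Chain' (fun a b => hd a = tl b) := by
  induction h with
  | nil => simp [List.Chain']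
  | cons a h ih =>
    rw [List.Chain', List.isChain_cons]
    exact ⟨fun b hb => (h.tl_head b hb).symm, ih⟩

lemma Trail.hd_getLast {u v : V} {z : List E} (h : Trail tl hd u v z) :
    ∀ a ∈ z.getLast?, hd a = v := by
  induction h with
  | nil => simp
  | cons a h ih =>
    rename_i w z
    cases z with
    | nil => simpa using h.nil_eq
    | cons b t => rw [List.getLast?_cons_cons]; exact ih

lemma trail_of_chain : ∀ {z : List E}, z.Chain' (fun a b => hd a = tl b) →
    ∀ a ∈ z.head?, ∀ b ∈ z.getLast?, Trail tl hd (tl a) (hd b) z := by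
  intro z
  induction z with
  | nil => simp
  | cons a t ih =>
    intro hch c hc b hb
    simp only [List.head?_cons, Option.mem_some_iff] at hc
    subst hc
    cases t with
    | nil =>
      simp only [List.getLast?_singleton, Option.mem_some_iff] at hb
      subst hb
      exact .cons a (.nil _)
    | cons d t' =>
      rw [List.Chain', List.isChain_cons_cons] at hch
      rw [List.getLast?_cons_cons] at hb
      have := ih hch.2 d (by simp) b hb
      rw [← hch.1] at this
      exact .cons a this

lemma Trail.split {z₁ z₂ : List E} {u v : V} (h : Trail tl hd u v (z₁ ++ z₂)) :
    ∃ w, Trail tl hd u w z₁ ∧ Trail tl hd w v z₂ := by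
  induction z₁ generalizing u with
  | nil => exact ⟨u, .nil u, h⟩
  | cons a t ih =>
    cases h with
    | cons a h =>
      obtain ⟨w, h1, h2⟩ := ih h
      exact ⟨w, .cons a h1, h2⟩

lemma exists_dup_decomp {α β : Type*} (f : α → β) :
    ∀ (l : List α), ¬ (l.map f).Nodup →
      ∃ A b B c C, l = A ++ b :: (B ++ c :: C) ∧ f b = f c := by
  intro l
  induction l with
  | nil => simp
  | cons a t ih =>
    intro h
    rw [List.map_cons, List.nodup_cons] at h
    push_neg at h
    by_cases hmem : f a ∈ t.map f
    · obtain ⟨c, hc, hfc⟩ := List.mem_map.1 hmem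
      obtain ⟨B, C, rfl⟩ := List.append_of_mem hc
      exact ⟨[], a, B, c, C, by simp, hfc.symm⟩
    · obtain ⟨A, b, B, c, C, rfl, hbc⟩ := ih (h hmem)
      exact ⟨a :: A, b, B, c, C, by simp, hbc⟩

end TrailAux

section Potential

variable {V E : Type*} {tl hd : E → V}

lemma closed_nonpos (y : E → ℝ)
    (hc : ∀ z, IsCircuit tl hd z → (z.map y).sum ≤ 0) :
    ∀ (z : List E) (u : V), Trail tl hd u u z → (z.map y).sum ≤ 0 := by
  have key : ∀ n (z : List E) (u : V), z.length = n → Trail tl hd u u z →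
      (z.map y).sum ≤ 0 := by
    intro n
    induction n using Nat.strong_induction_on with
    | _ n ih =>
      intro z u hlen hzu
      cases z with
      | nil => simp
      | cons a t =>
        by_cases hnd : ((a :: t).map tl).Nodup
        · apply hc
          refine ⟨by simp, hnd, hzu.chain', ?_⟩
          intro b hb d hd'
          rw [hzu.hd_getLast b hb, hzu.tl_head d hd']
        · obtain ⟨A, b, B, c, C, hdec, hbc⟩ := exists_dup_decomp tl _ hnd
          rw [hdec] at hzu
          rw [show b :: (B ++ c :: C) = (b :: B) ++ (c :: C) by simp] at hzu
          obtain ⟨w, h1, h2⟩ := hzu.split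
          obtain ⟨w', h3, h4⟩ := h2.split
          have hw : w = tl b := by cases h3; rfl
          have hw' : w' = tl c := by cases h4; rfl
          -- closed walk b :: B at tl b
          have hclosed1 : Trail tl hd (tl b) (tl b) (b :: B) := by
            rw [hw, hw', ← hbc] at h3
            exact h3
          -- closed walk A ++ c :: C at u
          have hclosed2 : Trail tl hd u u (A ++ c :: C) := by
            apply h1.append
            rw [hw, hbc, ← hw']
            exact h4
          have hlen1 : (b :: B).length < n := by
            rw [← hlen, hdec]; simp; omega
          have hlen2 : (A ++ c :: C).length < n := by
            rw [← hlen, hdec]; simp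
          have s1 := ih _ hlen1 _ _ rfl hclosed1
          have s2 := ih _ hlen2 _ _ rfl hclosed2
          have : ((a :: t).map y).sum
              = ((b :: B).map y).sum + ((A ++ c :: C).map y).sum := by
            rw [hdec]; simp; ring
          rw [this]; linarith
  exact fun z u h => key z.length z u rfl h

lemma potential_exists [Nonempty V] (y : E → ℝ)
    (hwalk : ∀ u v : V, ∃ z, Trail tl hd u v z)
    (hc : ∀ z, IsCircuit tl hd z → (z.map y).sum ≤ 0) :
    ∃ h : V → ℝ, (∀ a, y a ≤ h (tl a) - h (hd a)) ∧
      ∀ z, IsCircuit tl hd z → (z.map y).sum = 0 →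
        ∀ a ∈ z, h (tl a) - h (hd a) = y a := by
  classical
  obtain r : V := Classical.arbitrary V
  set S : V → Set ℝ := fun u => {s | ∃ z, Trail tl hd u r z ∧ (z.map y).sum = s} with hS
  have hne : ∀ u, (S u).Nonempty := by
    intro u
    obtain ⟨z, hz⟩ := hwalk u r
    exact ⟨_, z, hz, rfl⟩
  have hbdd : ∀ u, BddAbove (S u) := by
    intro u
    obtain ⟨w, hw⟩ := hwalk r u
    refine ⟨-(w.map y).sum, ?_⟩
    rintro s ⟨z, hz, rfl⟩
    have := closed_nonpos y hc (z ++ w) u (hz.append hw)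
    rw [List.map_append, List.sum_append] at this
    linarith
  set h : V → ℝ := fun u => sSup (S u) with hh
  have claim1 : ∀ a : E, y a ≤ h (tl a) - h (hd a) := by
    intro a
    have : h (hd a) ≤ h (tl a) - y a := by
      apply csSup_le (hne _)
      rintro s ⟨z, hz, rfl⟩
      have hmem : y a + (z.map y).sum ∈ S (tl a) :=
        ⟨a :: z, .cons a hz, by simp⟩
      have := le_csSup (hbdd _) hmem
      rw [hh]; linarith
    linarith
  refine ⟨h, claim1, ?_⟩
  -- telescoping
  have tele : ∀ (z : List E) (u v : V), Trail tl hd u v z →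
      (z.map fun b => h (tl b) - h (hd b)).sum = h u - h v := by
    intro z u v hz
    induction hz with
    | nil => simp
    | cons a h' ih => simp [ih]
  intro z hz hsum a ha
  obtain ⟨hne', hnd, hch, hlast⟩ := hz
  obtain ⟨d, t, rfl⟩ := List.exists_cons_of_ne_nil hne'
  have htr : Trail tl hd (tl d) (tl d) (d :: t) := by
    obtain ⟨b, hb⟩ : ∃ b, (d :: t).getLast? = some b :=
      ⟨(d :: t).getLast (by simp), List.getLast?_eq_getLast (by simp)⟩
    have := trail_of_chain hch d (by simp) b hb
    rwa [hlast b hb d (by simp)] at this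
  have htel := tele _ _ _ htr
  have hzero : ((d :: t).map fun b => (h (tl b) - h (hd b)) - y b).sum = 0 := by
    have : ((d :: t).map fun b => (h (tl b) - h (hd b)) - y b).sum
        = ((d :: t).map fun b => h (tl b) - h (hd b)).sum - ((d :: t).map y).sum := by
      induction (d :: t) with
      | nil => simp
      | cons p q ih => simp [ih]; ring
    rw [this, htel, hsum]; ring
  have hnonneg : ∀ b ∈ d :: t, 0 ≤ (h (tl b) - h (hd b)) - y b :=
    fun b _ => by have := claim1 b; linarith
  have hmem : (h (tl a) - h (hd a)) - y a ∈ (d :: t).map fun b => (h (tl b) - h (hd b)) - y b :=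
    List.mem_map.2 ⟨a, ha, rfl⟩
  have hle := List.single_le_sum (fun s hs => by
    obtain ⟨b, hb, rfl⟩ := List.mem_map.1 hs; exact hnonneg b hb) _ hmem
  rw [hzero] at hle
  have := hnonneg a ha
  linarith

end Potential

section ERealAux

lemma ereal_sum_bot {E : Type*} (x : E → EReal) :
    ∀ (l : List E), (∃ a ∈ l, x a = ⊥) → (l.map x).sum = ⊥ := by
  intro l
  induction l with
  | nil => simp
  | cons a t ih =>
    rintro ⟨b, hb, hxb⟩
    rcases List.mem_cons.1 hb with rfl | hb'
    · simp [hxb, EReal.bot_add]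
    · simp [ih ⟨b, hb', hxb⟩, EReal.add_bot]

lemma ereal_sum_coe {E : Type*} (x : E → EReal) :
    ∀ l : List E, (∀ a ∈ l, x a ≠ ⊥) → (∀ a ∈ l, x a ≠ ⊤) →
      (l.map x).sum = (((l.map fun a => (x a).toReal).sum : ℝ) : EReal) := by
  intro l
  induction l with
  | nil => simp
  | cons a t ih =>
    intro hb ht
    have h1 : x a = ((x a).toReal : ℝ) := (EReal.coe_toReal (ht a (by simp)) (hb a (by simp))).symm
    simp only [List.map_cons, List.sum_cons, EReal.coe_add]
    rw [ih (fun b hbt => hb b (by simp [hbt])) (fun b hbt => ht b (by simp [hbt]))]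
    rw [← h1]

lemma list_sum_map_add_const {α : Type*} (l : List α) (f : α → ℝ) (c : ℝ) :
    (l.map fun a => f a + c).sum = (l.map f).sum + l.length * c := by
  induction l with
  | nil => simp
  | cons a t ih => simp [ih]; ring

end ERealAux

/-- Subintegrability lemma: on a finite connected graph, if `x : 𝔼 → ℝ ∪ {-∞}` satisfies
`x(a) + x(ā) ≤ 0` for every arrow and has nonpositive sum along every circuit, then there
is `h : V → ℝ` with `x(a) ≤ h(tail a) - h(head a)` for every arrow `a`, with equality iff
`x(a) + x(ā) = 0` or `a` lies on a circuit along which the sum of `x` is `0`. -/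
theorem subintegrability
    {V E : Type*} [Fintype V] [Fintype E]
    (rev : E → E) (tl hd : E → V)
    (hrev : ∀ a, rev (rev a) = a)
    (hswap : ∀ a, tl (rev a) = hd a)
    (hfree : ∀ a, rev a ≠ a)
    (hconn : ∀ u v : V,
      Relation.ReflTransGen (fun p q => ∃ a : E, tl a = p ∧ hd a = q) u v)
    (x : E → EReal)
    (hxtop : ∀ a, x a ≠ ⊤)
    (hpair : ∀ a, x a + x (rev a) ≤ 0)
    (hcirc : ∀ z : List E, IsCircuit tl hd z → (z.map x).sum ≤ 0) :
    ∃ h : V → ℝ, ∀ a : E,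
      x a ≤ ((h (tl a) - h (hd a) : ℝ) : EReal) ∧
      (x a = ((h (tl a) - h (hd a) : ℝ) : EReal) ↔
        (x a + x (rev a) = 0 ∨
          ∃ z : List E, IsCircuit tl hd z ∧ a ∈ z ∧ (z.map x).sum = 0)) := by
  classical
  rcases isEmpty_or_nonempty E with hE | hE
  · exact ⟨0, fun a => isEmptyElim a⟩
  have hV : Nonempty V := ⟨tl (Classical.arbitrary E)⟩
  -- the tight set
  set T : Set E := {a | ∃ z, IsCircuit tl hd z ∧ a ∈ z ∧ (z.map x).sum = 0} with hTdef
  have hzero_finite : ∀ z, IsCircuit tl hd z → (z.map x).sum = 0 → ∀ a ∈ z, x a ≠ ⊥ := by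
    intro z hz hs a ha hbot
    rw [ereal_sum_bot x z ⟨a, ha, hbot⟩] at hs
    exact absurd hs (by simp)
  have hT_ne_bot : ∀ a ∈ T, x a ≠ ⊥ := by
    rintro a ⟨z, hz, ha, hs⟩
    exact hzero_finite z hz hs a ha
  -- hd of rev
  have hswap' : ∀ a, hd (rev a) = tl a := by
    intro a
    have := hswap (rev a)
    rw [hrev] at this
    exact this.symm
  -- pair-tight arrows lie on zero circuits
  have hpairT : ∀ a, x a + x (rev a) = 0 → a ∈ T := by
    intro a hpz
    by_cases hloop : tl a = hd a
    · have hca : IsCircuit tl hd [a] :=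
        ⟨by simp, by simp, by simp [List.Chain'], by simp [hloop.symm]⟩
      have hcra : IsCircuit tl hd [rev a] :=
        ⟨by simp, by simp, by simp [List.Chain'], by simp [hswap, hswap', hloop.symm]⟩
      have h1 : x a ≤ 0 := by simpa using hcirc [a] hca
      have h2 : x (rev a) ≤ 0 := by simpa using hcirc [rev a] hcra
      have h3 : x a + x (rev a) ≤ x a + 0 := add_le_add_right h2 _
      rw [hpz, add_zero] at h3
      have hxa0 : x a = 0 := le_antisymm h1 h3
      exact ⟨[a], hca, by simp, by simp [hxa0]⟩
    · have hc2 : IsCircuit tl hd [a, rev a] := by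
        refine ⟨by simp, ?_, ?_, ?_⟩
        · simp [hswap, hloop]
        · simp [List.Chain', (hswap a).symm]
        · simp [hswap']
      refine ⟨[a, rev a], hc2, by simp, ?_⟩
      simpa using hpz
  -- finiteness of circuits and the gap δ
  have hfinC : {z : List E | IsCircuit tl hd z}.Finite := by
    apply (List.finite_length_le E (Fintype.card E)).subset
    intro z hz
    have : z.Nodup := List.Nodup.of_map tl hz.2.1
    exact this.length_le_card
  set S : Set ℝ := (fun z : List E => (z.map fun a => (x a).toReal).sum) ''
      {z | IsCircuit tl hd z ∧ (z.map x).sum < 0 ∧ ∀ a ∈ z, x a ≠ ⊥} with hSdef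
  have hfinS : S.Finite := ((hfinC.subset (fun z hz => hz.1)).image _)
  have hSneg : ∀ s ∈ S, s < 0 := by
    rintro s ⟨z, ⟨hz, hneg, hnb⟩, rfl⟩
    rw [ereal_sum_coe x z hnb (fun a _ => hxtop a)] at hneg
    exact_mod_cast hneg
  set δ : ℝ := if hs : S.Nonempty then -sSup S else 1 with hδdef
  have hδpos : 0 < δ := by
    rw [hδdef]
    split_ifs with hs
    · have := hSneg _ (hs.csSup_mem hfinS)
      linarith
    · norm_num
  have hδle : ∀ s ∈ S, s ≤ -δ := by
    intro s hs
    rw [hδdef, dif_pos ⟨s, hs⟩, neg_neg]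
    exact le_csSup hfinS.bddAbove hs
  set N : ℕ := Fintype.card V with hNdef
  set ε : ℝ := δ / (N + 1) with hεdef
  have hεpos : 0 < ε := by positivity
  have hNε : (N : ℝ) * ε ≤ δ := by
    rw [hεdef]
    rw [div_eq_inv_mul, ← mul_assoc]
    have h1 : (N : ℝ) * ((N : ℝ) + 1)⁻¹ ≤ 1 := by
      rw [mul_inv_le_iff₀ (by positivity)]
      linarith
    nlinarith
  set M : ℝ := Finset.univ.sup' Finset.univ_nonempty (fun a => |(x a).toReal|) with hMdef
  have hM : ∀ a : E, |(x a).toReal| ≤ M := fun a => Finset.le_sup' (fun b => |(x b).toReal|) (Finset.mem_univ a)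
  have hM0 : 0 ≤ M := le_trans (abs_nonneg _) (hM (Classical.arbitrary E))
  set L : ℝ := N * (M + ε) + 1 with hLdef
  set y : E → ℝ := fun a => if a ∈ T then (x a).toReal
      else if x a = ⊥ then -L else (x a).toReal + ε with hydef
  have hyle : ∀ a, y a ≤ M + ε := by
    intro a
    simp only [hydef]
    split_ifs with h1 h2
    · have := hM a; have := abs_nonneg ((x a).toReal); nlinarith [le_abs_self ((x a).toReal)]
    · have hN0 : (0:ℝ) ≤ N := Nat.cast_nonneg N
      rw [hLdef]; nlinarith
    · have := le_abs_self ((x a).toReal); have := hM a; linarith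
  have hlenN : ∀ z : List E, IsCircuit tl hd z → z.length ≤ N := by
    intro z hz
    have := hz.2.1.length_le_card
    rwa [List.length_map] at this
  -- all circuits have nonpositive y-sum
  have ycirc : ∀ z, IsCircuit tl hd z → (z.map y).sum ≤ 0 := by
    intro z hz
    by_cases hbot : ∃ a ∈ z, x a = ⊥
    · obtain ⟨a, ha, hab⟩ := hbot
      obtain ⟨A, B, rfl⟩ := List.append_of_mem ha
      have haT : a ∉ T := fun h => hT_ne_bot a h hab
      have hya : y a = -L := by simp only [hydef]; simp [haT, hab]
      have hA : (A.map y).sum ≤ A.length * (M + ε) := by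
        have := List.sum_le_card_nsmul (A.map y) (M + ε)
          (fun s hs => by obtain ⟨b, _, rfl⟩ := List.mem_map.1 hs; exact hyle b)
        simpa [nsmul_eq_mul, mul_add] using this
      have hB : (B.map y).sum ≤ B.length * (M + ε) := by
        have := List.sum_le_card_nsmul (B.map y) (M + ε)
          (fun s hs => by obtain ⟨b, _, rfl⟩ := List.mem_map.1 hs; exact hyle b)
        simpa [nsmul_eq_mul, mul_add] using this
      have hlen : A.length + B.length + 1 ≤ N := by
        have := hlenN _ hz
        simpa [Nat.add_comm, Nat.add_assoc, Nat.add_left_comm] using this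
      have hME : 0 ≤ M + ε := by linarith
      have hcast : (A.length : ℝ) + B.length + 1 ≤ (N:ℝ) := by exact_mod_cast hlen
      have : ((A ++ a :: B).map y).sum = (A.map y).sum + y a + (B.map y).sum := by
        simp [List.map_append, List.sum_append]; ring
      rw [this, hya, hLdef]
      nlinarith
    · push_neg at hbot
      have hsc := ereal_sum_coe x z hbot (fun a _ => hxtop a)
      by_cases hall : ∀ a ∈ z, a ∈ T
      · have hmapeq : z.map y = z.map fun a => (x a).toReal :=
          List.map_congr_left (fun a ha => by simp only [hydef]; simp [hall a ha])
        rw [hmapeq]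
        have := hcirc z hz
        rw [hsc] at this
        exact_mod_cast this
      · push_neg at hall
        obtain ⟨a, ha, haT⟩ := hall
        have hlt : (z.map x).sum < 0 :=
          lt_of_le_of_ne (hcirc z hz) (fun h0 => haT ⟨z, hz, ha, h0⟩)
        have hs0 : (z.map fun a => (x a).toReal).sum ≤ -δ :=
          hδle _ ⟨z, ⟨hz, hlt, hbot⟩, rfl⟩
        have hpt : ∀ b ∈ z, y b ≤ (x b).toReal + ε := by
          intro b hb
          simp only [hydef]
          split_ifs with h1 h2
          · linarith
          · exact absurd h2 (hbot b hb)
          · exact le_refl _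
        have hsum_le : (z.map y).sum ≤ (z.map fun b => (x b).toReal + ε).sum :=
          List.sum_le_sum hpt
        rw [list_sum_map_add_const] at hsum_le
        have hlz : (z.length : ℝ) ≤ N := by exact_mod_cast hlenN z hz
        have : (z.length : ℝ) * ε ≤ (N:ℝ) * ε := by nlinarith
        linarith
  -- connectivity gives trails
  have hwalk : ∀ u v : V, ∃ z, Trail tl hd u v z := by
    intro u v
    induction hconn u v with
    | refl => exact ⟨[], .nil u⟩
    | tail hst step ih =>
      obtain ⟨z, hz⟩ := ih
      obtain ⟨e, he1, he2⟩ := step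
      refine ⟨z ++ [e], hz.append ?_⟩
      rw [← he1, ← he2]
      exact .cons e (.nil _)
  obtain ⟨h, hineq, htight⟩ := potential_exists y hwalk ycirc
  -- members of T satisfy equality
  have hTa : ∀ a ∈ T, x a = ((h (tl a) - h (hd a) : ℝ) : EReal) := by
    rintro a ⟨z, hz, haz, hs0⟩
    have hallT : ∀ b ∈ z, b ∈ T := fun b hb => ⟨z, hz, hb, hs0⟩
    have hnb : ∀ b ∈ z, x b ≠ ⊥ := hzero_finite z hz hs0
    have hsc := ereal_sum_coe x z hnb (fun b _ => hxtop b)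
    rw [hsc] at hs0
    have hs0' : (z.map fun b => (x b).toReal).sum = 0 := by exact_mod_cast hs0
    have hmapeq : z.map y = z.map fun b => (x b).toReal :=
      List.map_congr_left (fun b hb => by simp only [hydef]; simp [hallT b hb])
    have hyz : (z.map y).sum = 0 := by rw [hmapeq, hs0']
    have := htight z hz hyz a haz
    have hya : y a = (x a).toReal := by simp only [hydef]; simp [hallT a haz]
    have hx' : x a = (((x a).toReal : ℝ) : EReal) := (EReal.coe_toReal (hxtop a) (hnb a haz)).symm
    rw [hx', EReal.coe_eq_coe_iff, ← hya]
    exact this.symm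
  refine ⟨h, fun a => ?_⟩
  have hya_le : y a ≤ h (tl a) - h (hd a) := hineq a
  constructor
  · -- the inequality
    by_cases haT : a ∈ T
    · exact le_of_eq (hTa a haT)
    · by_cases hab : x a = ⊥
      · simp [hab]
      · have hxa : x a = ((x a).toReal : ℝ) := (EReal.coe_toReal (hxtop a) hab).symm
        have hyv : y a = (x a).toReal + ε := by simp only [hydef]; simp [haT, hab]
        rw [hxa, EReal.coe_le_coe_iff]
        linarith
  constructor
  · intro heq
    by_cases haT : a ∈ T
    · exact Or.inr haT
    · exfalso
      have hab : x a ≠ ⊥ := by rw [heq]; exact EReal.coe_ne_bot _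
      have hxa : x a = ((x a).toReal : ℝ) := (EReal.coe_toReal (hxtop a) hab).symm
      have hyv : y a = (x a).toReal + ε := by simp only [hydef]; simp [haT, hab]
      rw [hxa, EReal.coe_eq_coe_iff] at heq
      linarith
  · rintro (hp | hcz)
    · exact hTa a (hpairT a hp)
    · exact hTa a hcz
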